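/- Let F be a field, n a positive integer, and A ∈ M_n(F) a matrix with trace zero. Then A lies in the additive subgroup [M_n(F), M_n(F)] generated by additive commutators. -/

import Mathlib

/-- The additive subgroup generated by all additive commutators of a ring. -/
def commutatorAddSubgroup (R : Type*) [Ring R] : AddSubgroup R :=
  AddSubgroup.closure {x | ∃ a b : R, x = a * b - b * a}

lemma comm_mem {R : Type*} [Ring R] (a b : R) :
    a * b - b * a ∈ commutatorAddSubgroup R :=
  AddSubgroup.subset_closure ⟨a, b, rfl⟩

theorem stmt_2 (F : Type*) [Field F] (n : ℕ) (hn : 0 < n)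
    (A : Matrix (Fin n) (Fin n) F) (hA : Matrix.trace A = 0) :
    A ∈ commutatorAddSubgroup (Matrix (Fin n) (Fin n) F) := by
  haveI : NeZero n := ⟨hn.ne'⟩
  set E := fun (i j : Fin n) (c : F) => Matrix.single i j c with hE
  set f : Fin n → Fin n → Matrix (Fin n) (Fin n) F := fun i j =>
    if i = j then E i 0 (A i i) * E 0 i 1 - E 0 i 1 * E i 0 (A i i)
    else E i i 1 * E i j (A i j) - E i j (A i j) * E i i 1 with hf
  have key : A = ∑ i, ∑ j, f i j := by
    have h1 : ∀ i j : Fin n,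
        f i j = E i j (A i j) - if i = j then E 0 0 (A i i) else 0 := by
      intro i j
      by_cases h : i = j
      · subst h
        simp [hf, hE, Matrix.single_mul_single_same]
      · have h2 : Matrix.single i j (A i j) * Matrix.single i i (1:F) = 0 :=
          Matrix.single_mul_single_of_ne (c := A i j) i j i (Ne.symm h) 1
        simp [hf, hE, h, h2]
    simp only [h1, Finset.sum_sub_distrib, Finset.sum_ite_eq,
      Finset.mem_univ, if_true]
    have h2 : ∑ i : Fin n, E 0 0 (A i i) = E 0 0 (Matrix.trace A) := by
      rw [Matrix.trace]
      induction (Finset.univ : Finset (Fin n)) using Finset.induction with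
      | empty => simp [hE]
      | insert _ _ h ih => simp only [hE, Matrix.diag] at ih ⊢; simp [Finset.sum_insert h, ih, hE, Matrix.single_add,
          Matrix.diag]
    rw [h2, hA]
    simp [hE, ← Matrix.matrix_eq_sum_single]
  rw [key]
  refine AddSubgroup.sum_mem _ fun i _ => AddSubgroup.sum_mem _ fun j _ => ?_
  by_cases h : i = j <;> simp only [hf, h, if_true, if_neg, if_false] <;>
    exact comm_mem _ _
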